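/- Let a < t₀ < b and let H : [a,b] → ℝ be C¹ with H(a) = H(b) = 0, H ≥ 0, H(t₀) = 1 the unique maximum, H increasing on [a,t₀] and decreasing on [t₀,b]. Then the measures μ_α(dt) = ((α+1)/2) H(t)^α |H'(t)| dt on [a,b] converge weakly to the Dirac measure δ_{t₀} as α → ∞; that is, for every continuous f : [a,b] → ℝ, ((α+1)/2) ∫_a^b f(t) H(t)^α |H'(t)| dt → f(t₀) as α → ∞. -/

import Mathlib

open Set MeasureTheory Filter

set_option maxHeartbeats 1000000 in
theorem stmt_13 (H H' : ℝ → ℝ) (a b t₀ : ℝ) (hab : a < b)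
    (ht₀ : t₀ ∈ Ioo a b)
    (hderiv : ∀ t ∈ Icc a b, HasDerivWithinAt H (H' t) (Icc a b) t)
    (hH'cont : ContinuousOn H' (Icc a b))
    (ha : H a = 0) (hb : H b = 0)
    (hpos : ∀ t ∈ Icc a b, 0 ≤ H t)
    (hmax : H t₀ = 1)
    (huniq : ∀ t ∈ Icc a b, H t = 1 → t = t₀)
    (hmono : MonotoneOn H (Icc a t₀))
    (hanti : AntitoneOn H (Icc t₀ b)) :
    ∀ f : ℝ → ℝ, ContinuousOn f (Icc a b) →
      Tendsto (fun α : ℝ => ((α + 1) / 2) * ∫ t in a..b, f t * (H t ^ α * |H' t|))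
        atTop (nhds (f t₀)) := by
  intro f hf
  obtain ⟨hat, htb⟩ := ht₀
  have ht₀m : t₀ ∈ Icc a b := ⟨hat.le, htb.le⟩
  have hHc : ContinuousOn H (Icc a b) := fun t ht => (hderiv t ht).continuousWithinAt
  have hderivAt : ∀ x ∈ Ioo a b, HasDerivAt H (H' x) x := fun x hx =>
    (hderiv x (Ioo_subset_Icc_self hx)).hasDerivAt (Icc_mem_nhds hx.1 hx.2)
  -- sign of H' on the two open pieces
  have hH'nn : ∀ x ∈ Ioo a t₀, 0 ≤ H' x := by
    intro x hx
    have hx' : x ∈ Ioo a b := ⟨hx.1, hx.2.trans htb⟩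
    have hd := ((hderivAt x hx').hasDerivWithinAt (s := Ioi x))
    rw [hasDerivWithinAt_iff_tendsto_slope' (notMem_Ioi.2 le_rfl)] at hd
    refine ge_of_tendsto hd ?_
    filter_upwards [Ioo_mem_nhdsGT_of_mem ⟨le_rfl, hx.2⟩] with y hy
    rw [slope_def_field]
    have h1 : H x ≤ H y := hmono ⟨hx.1.le, hx.2.le⟩ ⟨hx.1.le.trans hy.1.le, hy.2.le⟩ hy.1.le
    exact div_nonneg (by linarith) (by linarith [hy.1])
  have hH'np : ∀ x ∈ Ioo t₀ b, H' x ≤ 0 := by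
    intro x hx
    have hx' : x ∈ Ioo a b := ⟨hat.trans hx.1, hx.2⟩
    have hd := ((hderivAt x hx').hasDerivWithinAt (s := Iio x))
    rw [hasDerivWithinAt_iff_tendsto_slope' (notMem_Iio.2 le_rfl)] at hd
    refine le_of_tendsto hd ?_
    filter_upwards [Ioo_mem_nhdsLT_of_mem ⟨hx.1, le_rfl⟩] with y hy
    rw [slope_def_field]
    have h1 : H x ≤ H y := hanti ⟨hy.1.le, hy.2.le.trans hx.2.le⟩ ⟨hx.1.le, hx.2.le⟩ hy.2.le
    have h2 : y - x < 0 := by linarith [hy.2]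
    exact div_nonpos_of_nonneg_of_nonpos (by linarith) h2.le
  -- bound on f
  obtain ⟨M, hM⟩ := isCompact_Icc.exists_bound_of_continuousOn hf
  have hM0 : 0 ≤ M := le_trans (norm_nonneg _) (hM t₀ ht₀m)
  -- H ≤ 1 on [a,b], strictly away from t₀
  have hHle1 : ∀ t ∈ Icc a b, H t ≤ 1 := by
    intro t ht
    rcases le_total t t₀ with h | h
    · rw [← hmax]; exact hmono ⟨ht.1, h⟩ ⟨hat.le, le_rfl⟩ h
    · rw [← hmax]; exact hanti ⟨le_rfl, htb.le⟩ ⟨h, ht.2⟩ h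
  have hHlt1 : ∀ t ∈ Icc a b, t ≠ t₀ → H t < 1 := fun t ht hne =>
    lt_of_le_of_ne (hHle1 t ht) (fun e => hne (huniq t ht e))
  -- a.e. avoidance of a point
  have ae_ne : ∀ p : ℝ, ∀ᵐ x : ℝ, x ≠ p := by
    intro p
    have : ({p}ᶜ : Set ℝ) ∈ ae volume := compl_mem_ae_iff.2 (measure_singleton p)
    filter_upwards [this] with x hx
    simpa using hx
  rw [Metric.tendsto_atTop]
  intro ε hε
  -- choose δ from continuity of f at t₀
  have hfc : ContinuousWithinAt f (Icc a b) t₀ := hf t₀ ht₀m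
  rw [Metric.continuousWithinAt_iff] at hfc
  obtain ⟨δ, hδ0, hδ⟩ := hfc (ε / 4) (by linarith)
  set c : ℝ := max a (t₀ - δ / 2) with hc_def
  set d : ℝ := min b (t₀ + δ / 2) with hd_def
  have hac : a ≤ c := le_max_left _ _
  have hct : c < t₀ := max_lt hat (by linarith)
  have htd : t₀ < d := lt_min htb (by linarith)
  have hdb : d ≤ b := min_le_left _ _
  have hcm : c ∈ Icc a b := ⟨hac, hct.le.trans htb.le⟩
  have hdm : d ∈ Icc a b := ⟨hat.le.trans htd.le, hdb⟩
  have hnear : ∀ t ∈ Icc c d, |f t - f t₀| ≤ ε / 4 := by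
    intro t ht
    have htab : t ∈ Icc a b := ⟨hac.trans ht.1, ht.2.trans hdb⟩
    have h1 : t₀ - δ / 2 ≤ t := le_trans (le_max_right a _) ht.1
    have h2 : t ≤ t₀ + δ / 2 := ht.2.trans (min_le_right b _)
    have : dist t t₀ < δ := by rw [Real.dist_eq]; rw [abs_lt]; constructor <;> linarith
    have := hδ htab this
    rw [Real.dist_eq] at this
    exact this.le
  set θ : ℝ := max (H c) (H d) with hθ_def
  have hθ0 : 0 ≤ θ := le_trans (hpos c hcm) (le_max_left _ _)
  have hθ1 : θ < 1 := max_lt (hHlt1 c hcm hct.ne) (hHlt1 d hdm htd.ne')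
  -- choose N from the tail of θ ^ (α+1)
  have htt : Tendsto (fun α : ℝ => θ ^ (α + 1)) atTop (nhds 0) :=
    (tendsto_rpow_atTop_of_base_lt_one θ (by linarith) hθ1).comp
      (tendsto_atTop_add_const_right atTop 1 tendsto_id)
  have hev : ∀ᶠ α : ℝ in atTop, θ ^ (α + 1) < ε / (4 * (M + 1)) :=
    htt.eventually (gt_mem_nhds (by positivity))
  obtain ⟨N₀, hN₀⟩ := eventually_atTop.1 hev
  refine ⟨max N₀ 1, fun α hα => ?_⟩
  have hα1 : (1 : ℝ) ≤ α := le_trans (le_max_right _ _) hα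
  have hα0 : (0 : ℝ) < α := by linarith
  have hαp : (0 : ℝ) < α + 1 := by linarith
  have hθα : θ ^ (α + 1) < ε / (4 * (M + 1)) := hN₀ α (le_trans (le_max_left _ _) hα)
  have hθαnn : 0 ≤ θ ^ (α + 1) := Real.rpow_nonneg hθ0 _
  -- the density Φ
  set Φ : ℝ → ℝ := fun t => H t ^ α * |H' t| with hΦ_def
  have contΦ : ContinuousOn Φ (Icc a b) :=
    (hHc.rpow_const fun x hx => Or.inr hα0.le).mul hH'cont.abs
  have Φnn : ∀ t ∈ Icc a b, 0 ≤ Φ t := fun t ht =>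
    mul_nonneg (Real.rpow_nonneg (hpos t ht) _) (abs_nonneg _)
  -- integrability helper
  have Iint : ∀ g : ℝ → ℝ, ContinuousOn g (Icc a b) → ∀ u v : ℝ, a ≤ u → u ≤ v → v ≤ b →
      IntervalIntegrable (fun t => g t * Φ t) volume u v := by
    intro g hg u v hu huv hv
    apply ContinuousOn.intervalIntegrable
    rw [uIcc_of_le huv]
    exact (hg.mul contΦ).mono (Icc_subset_Icc hu hv)
  have IintΦ : ∀ u v : ℝ, a ≤ u → u ≤ v → v ≤ b →
      IntervalIntegrable Φ volume u v := by
    intro u v hu huv hv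
    have := Iint (fun _ => (1 : ℝ)) continuousOn_const u v hu huv hv
    simpa using this
  -- change of variables
  have subst : ∀ u v : ℝ, a ≤ u → u ≤ v → v ≤ b →
      ∫ t in u..v, H t ^ α * H' t = (H v ^ (α + 1) - H u ^ (α + 1)) / (α + 1) := by
    intro u v hu huv hv
    have huv' : uIcc u v = Icc u v := uIcc_of_le huv
    have hsub : Icc u v ⊆ Icc a b := Icc_subset_Icc hu hv
    have h1 : ∫ t in u..v, H' t • ((fun y : ℝ => y ^ α) ∘ H) t = ∫ x in H u..H v, x ^ α := by
      apply intervalIntegral.integral_comp_smul_deriv''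
      · rw [huv']; exact hHc.mono hsub
      · rw [min_eq_left huv, max_eq_right huv]
        intro x hx
        exact (hderivAt x ⟨lt_of_le_of_lt hu hx.1, lt_of_lt_of_le hx.2 hv⟩).hasDerivWithinAt
      · rw [huv']; exact hH'cont.mono hsub
      · rw [huv']
        rintro y ⟨x, hx, rfl⟩
        exact (Real.continuousAt_rpow_const _ _ (Or.inr hα0.le)).continuousWithinAt
    rw [integral_rpow (Or.inl (by linarith : (-1 : ℝ) < α))] at h1
    rw [← h1]
    apply intervalIntegral.integral_congr
    intro t _
    simp [smul_eq_mul, mul_comm]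
  -- explicit mass on left pieces
  have absL : ∀ u v : ℝ, a ≤ u → u ≤ v → v ≤ t₀ →
      ∫ t in u..v, Φ t = (H v ^ (α + 1) - H u ^ (α + 1)) / (α + 1) := by
    intro u v hu huv hv
    rw [← subst u v hu huv (hv.trans htb.le)]
    apply intervalIntegral.integral_congr_ae
    filter_upwards [ae_ne t₀] with x hx hmem
    rw [uIoc_of_le huv] at hmem
    have hxm : x ∈ Ioo a t₀ := ⟨lt_of_le_of_lt hu hmem.1, lt_of_le_of_ne (hmem.2.trans hv) hx⟩
    simp only [hΦ_def]
    rw [abs_of_nonneg (hH'nn x hxm)]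
  have absR : ∀ u v : ℝ, t₀ ≤ u → u ≤ v → v ≤ b →
      ∫ t in u..v, Φ t = (H u ^ (α + 1) - H v ^ (α + 1)) / (α + 1) := by
    intro u v hu huv hv
    have e1 : ∫ t in u..v, Φ t = ∫ t in u..v, -(H t ^ α * H' t) := by
      apply intervalIntegral.integral_congr_ae
      filter_upwards [ae_ne b] with x hx hmem
      rw [uIoc_of_le huv] at hmem
      have hxm : x ∈ Ioo t₀ b := ⟨lt_of_le_of_lt hu hmem.1, lt_of_le_of_ne (hmem.2.trans hv) hx⟩
      simp only [hΦ_def]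
      rw [abs_of_nonpos (hH'np x hxm), mul_neg]
    rw [e1, intervalIntegral.integral_neg, subst u v (hat.le.trans hu) huv hv]
    ring
  -- key integral values
  have hHa : H a ^ (α + 1) = 0 := by rw [ha]; exact Real.zero_rpow (by positivity)
  have hHt₀ : H t₀ ^ (α + 1) = 1 := by rw [hmax]; exact Real.one_rpow _
  have massL : ∫ t in a..c, Φ t = H c ^ (α + 1) / (α + 1) := by
    rw [absL a c le_rfl hac hct.le, hHa]; ring
  have massR : ∫ t in d..b, Φ t = H d ^ (α + 1) / (α + 1) := by
    rw [absR d b htd.le hdb le_rfl, hb]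
    rw [Real.zero_rpow (by positivity : (α : ℝ) + 1 ≠ 0)]; ring
  have massM : ∫ t in c..d, Φ t =
      (1 - H c ^ (α + 1)) / (α + 1) + (1 - H d ^ (α + 1)) / (α + 1) := by
    rw [← intervalIntegral.integral_add_adjacent_intervals
      (IintΦ c t₀ hac hct.le htb.le) (IintΦ t₀ d hat.le htd.le hdb),
      absL c t₀ hac hct.le le_rfl, absR t₀ d le_rfl htd.le hdb, hHt₀]
  have mass : ∫ t in a..b, Φ t = 2 / (α + 1) := by
    rw [← intervalIntegral.integral_add_adjacent_intervals
      (IintΦ a t₀ le_rfl hat.le htb.le) (IintΦ t₀ b hat.le htb.le le_rfl),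
      absL a t₀ le_rfl hat.le le_rfl, absR t₀ b le_rfl htb.le le_rfl, hHa, hb, hHt₀,
      Real.zero_rpow (by positivity : (α : ℝ) + 1 ≠ 0)]
    ring
  -- the error integral
  have hfsub : ContinuousOn (fun t => f t - f t₀) (Icc a b) := hf.sub continuousOn_const
  have habs : ContinuousOn (fun t => |f t - f t₀|) (Icc a b) := hfsub.abs
  set E : ℝ := ∫ t in a..b, (f t - f t₀) * Φ t with hE_def
  have hE : E = (∫ t in a..b, f t * Φ t) - f t₀ * (2 / (α + 1)) := by
    have h1 : ∀ t : ℝ, (f t - f t₀) * Φ t = f t * Φ t - f t₀ * Φ t := fun t => by ring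
    rw [hE_def]
    simp only [h1]
    rw [intervalIntegral.integral_sub (Iint f hf a b le_rfl hab.le le_rfl)
      (Iint (fun _ => f t₀) continuousOn_const a b le_rfl hab.le le_rfl),
      intervalIntegral.integral_const_mul, mass]
  -- |E| ≤ ∫ |f - f t₀| * Φ
  have hEabs : |E| ≤ ∫ t in a..b, |f t - f t₀| * Φ t := by
    refine le_trans (intervalIntegral.abs_integral_le_integral_abs hab.le) (le_of_eq ?_)
    apply intervalIntegral.integral_congr
    intro t ht
    rw [uIcc_of_le hab.le] at ht
    simp only [abs_mul, abs_of_nonneg (Φnn t ht)]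
  -- split and bound
  have split : (∫ t in a..b, |f t - f t₀| * Φ t) =
      (∫ t in a..c, |f t - f t₀| * Φ t) + (∫ t in c..d, |f t - f t₀| * Φ t)
        + ∫ t in d..b, |f t - f t₀| * Φ t := by
    rw [add_assoc, intervalIntegral.integral_add_adjacent_intervals
        (Iint _ habs c d hac (hct.le.trans htd.le) hdb) (Iint _ habs d b hdm.1 hdb le_rfl),
      intervalIntegral.integral_add_adjacent_intervals
        (Iint _ habs a c le_rfl hac hcm.2) (Iint _ habs c b hac hcm.2 le_rfl)]
  have bnd2M : ∀ t ∈ Icc a b, |f t - f t₀| ≤ 2 * M := by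
    intro t ht
    calc |f t - f t₀| ≤ |f t| + |f t₀| := abs_sub _ _
    _ ≤ M + M := add_le_add (hM t ht) (hM t₀ ht₀m)
    _ = 2 * M := by ring
  have tail : ∀ u v : ℝ, a ≤ u → u ≤ v → v ≤ b →
      (∫ t in u..v, |f t - f t₀| * Φ t) ≤ 2 * M * ∫ t in u..v, Φ t := by
    intro u v hu huv hv
    rw [← intervalIntegral.integral_const_mul]
    apply intervalIntegral.integral_mono_on huv (Iint _ habs u v hu huv hv)
      (Iint (fun _ => 2 * M) continuousOn_const u v hu huv hv)
    intro x hx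
    have hxab : x ∈ Icc a b := ⟨hu.trans hx.1, hx.2.trans hv⟩
    exact mul_le_mul_of_nonneg_right (bnd2M x hxab) (Φnn x hxab)
  have hHcθ : H c ^ (α + 1) ≤ θ ^ (α + 1) :=
    Real.rpow_le_rpow (hpos c hcm) (le_max_left _ _) (by linarith)
  have hHdθ : H d ^ (α + 1) ≤ θ ^ (α + 1) :=
    Real.rpow_le_rpow (hpos d hdm) (le_max_right _ _) (by linarith)
  have bound1 : (∫ t in a..c, |f t - f t₀| * Φ t) ≤ 2 * M * (θ ^ (α + 1) / (α + 1)) := by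
    refine le_trans (tail a c le_rfl hac hcm.2) ?_
    rw [massL]
    apply mul_le_mul_of_nonneg_left _ (by linarith)
    exact (div_le_div_iff_of_pos_right hαp).2 hHcθ
  have bound3 : (∫ t in d..b, |f t - f t₀| * Φ t) ≤ 2 * M * (θ ^ (α + 1) / (α + 1)) := by
    refine le_trans (tail d b hdm.1 hdb le_rfl) ?_
    rw [massR]
    apply mul_le_mul_of_nonneg_left _ (by linarith)
    exact (div_le_div_iff_of_pos_right hαp).2 hHdθ
  have bound2 : (∫ t in c..d, |f t - f t₀| * Φ t) ≤ ε / 4 * (2 / (α + 1)) := by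
    have h1 : (∫ t in c..d, |f t - f t₀| * Φ t) ≤ ε / 4 * ∫ t in c..d, Φ t := by
      rw [← intervalIntegral.integral_const_mul]
      apply intervalIntegral.integral_mono_on (hct.le.trans htd.le)
        (Iint _ habs c d hac (hct.le.trans htd.le) hdb)
        (Iint (fun _ => ε / 4) continuousOn_const c d hac (hct.le.trans htd.le) hdb)
      intro x hx
      have hxab : x ∈ Icc a b := ⟨hac.trans hx.1, hx.2.trans hdb⟩
      exact mul_le_mul_of_nonneg_right (hnear x hx) (Φnn x hxab)
    refine le_trans h1 ?_
    apply mul_le_mul_of_nonneg_left _ (by linarith)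
    rw [massM]
    have h2 : 0 ≤ H c ^ (α + 1) := Real.rpow_nonneg (hpos c hcm) _
    have h3 : 0 ≤ H d ^ (α + 1) := Real.rpow_nonneg (hpos d hdm) _
    rw [← add_div, div_le_div_iff₀ hαp hαp]
    nlinarith
  -- combine
  have hEbound : |E| ≤ (4 * M * θ ^ (α + 1) + ε / 2) / (α + 1) := by
    have := hEabs
    rw [split] at this
    have h4 : ε / 4 * (2 / (α + 1)) = (ε / 2) / (α + 1) := by ring
    calc |E| ≤ 2 * M * (θ ^ (α + 1) / (α + 1)) + ε / 4 * (2 / (α + 1))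
        + 2 * M * (θ ^ (α + 1) / (α + 1)) := by linarith [bound1, bound2, bound3]
    _ = (4 * M * θ ^ (α + 1) + ε / 2) / (α + 1) := by field_simp; ring
  have hkey : ((α + 1) / 2) * (∫ t in a..b, f t * (H t ^ α * |H' t|)) - f t₀
      = ((α + 1) / 2) * E := by
    rw [hE]
    field_simp
    simp only [hΦ_def, mul_assoc]
  rw [Real.dist_eq, hkey, abs_mul, abs_of_pos (by linarith : (0:ℝ) < (α + 1) / 2)]
  have h5 : ((α + 1) / 2) * |E| ≤ 2 * M * θ ^ (α + 1) + ε / 4 := by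
    calc ((α + 1) / 2) * |E| ≤ ((α + 1) / 2) * ((4 * M * θ ^ (α + 1) + ε / 2) / (α + 1)) :=
      mul_le_mul_of_nonneg_left hEbound (by linarith)
    _ = 2 * M * θ ^ (α + 1) + ε / 4 := by field_simp; ring
  have h6 : 2 * M * θ ^ (α + 1) < ε / 2 := by
    have h7 : 2 * M * θ ^ (α + 1) ≤ 2 * (M + 1) * θ ^ (α + 1) := by nlinarith
    have h8 : 2 * (M + 1) * θ ^ (α + 1) < 2 * (M + 1) * (ε / (4 * (M + 1))) := by
      apply mul_lt_mul_of_pos_left hθα (by linarith)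
    have h9 : 2 * (M + 1) * (ε / (4 * (M + 1))) = ε / 2 := by
      field_simp
      ring
    linarith
  linarith
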